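/- Let X and Y be locally compact Hausdorff spaces and let T : C₀(X)⁺ → C₀(Y)⁺ be a surjective map that is additive, positively homogeneous, order preserving, and Lipschitz (there exists M > 0 with ‖Tf − Tg‖ ≤ M‖f − g‖ for all f, g ∈ C₀(X)⁺). Then for each y ∈ Y there exists f ∈ C₀(X)⁺ with compact support such that Tf(y) > 0. -/

import Mathlib

open scoped ZeroAtInfty

/-- The positive cone of `C₀(X, ℝ)`. -/
def posCone (X : Type*) [TopologicalSpace X] : Set C₀(X, ℝ) :=
  {f | ∀ x, 0 ≤ f x}

/-- **Lemma 2.9.** For a surjective, additive, positively homogeneous, order preserving,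
Lipschitz map `T : C₀(X)⁺ → C₀(Y)⁺` and each `y ∈ Y`, there is a compactly supported
`f ∈ C₀(X)⁺` with `Tf(y) > 0`. -/
theorem stmt8 {X Y : Type*} [TopologicalSpace X] [T2Space X] [LocallyCompactSpace X]
    [TopologicalSpace Y] [T2Space Y] [LocallyCompactSpace Y]
    (T : C₀(X, ℝ) → C₀(Y, ℝ))
    (hmap : ∀ f ∈ posCone X, T f ∈ posCone Y)
    (hsurj : Set.SurjOn T (posCone X) (posCone Y))
    (hTadd : ∀ f ∈ posCone X, ∀ g ∈ posCone X, T (f + g) = T f + T g)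
    (hThom : ∀ r : ℝ, 0 ≤ r → ∀ f ∈ posCone X, T (r • f) = r • T f)
    (hTord : ∀ f ∈ posCone X, ∀ g ∈ posCone X,
      (∀ x : X, f x ≤ g x) → ∀ y : Y, T f y ≤ T g y)
    (M : ℝ) (hM : 0 < M)
    (hlip : ∀ f ∈ posCone X, ∀ g ∈ posCone X, ‖T f - T g‖ ≤ M * ‖f - g‖) :
    ∀ y : Y, ∃ f ∈ posCone X, HasCompactSupport (⇑f : X → ℝ) ∧ 0 < T f y := by
  intro y
  -- a compactly supported bump at y
  obtain ⟨φ, hφ1, -, hφc, hφmem⟩ :=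
    exists_continuous_one_zero_of_isCompact (isCompact_singleton (x := y))
      isClosed_empty (Set.disjoint_empty _)
  set h : C₀(Y, ℝ) := ⟨φ, hφc.is_zero_at_infty⟩ with hh
  have hhpos : h ∈ posCone Y := fun z => (hφmem z).1
  obtain ⟨g, hgpos, hTg⟩ := hsurj hhpos
  have hgy : T g y = 1 := by
    rw [hTg]
    exact hφ1 (Set.mem_singleton y)
  set ε : ℝ := 1 / (2 * M) with hε
  have hεpos : 0 < ε := by positivity
  -- the truncation f = (g - ε)⁺
  set fc : C(X, ℝ) := ⟨fun x => max (g x - ε) 0, by fun_prop⟩ with hfc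
  -- the set where g ≥ ε is compact
  have hev : ∀ᶠ x in Filter.cocompact X, dist (g x) 0 < ε :=
    Metric.tendsto_nhds.mp (ZeroAtInftyContinuousMapClass.zero_at_infty g) ε hεpos
  obtain ⟨K, hK, hKsub⟩ := Filter.mem_cocompact.mp hev
  have hCclosed : IsClosed {x : X | ε ≤ g x} :=
    isClosed_le continuous_const (map_continuous g)
  have hCK : {x : X | ε ≤ g x} ⊆ K := by
    intro x hx
    by_contra hxK
    have := hKsub hxK
    simp only [Set.mem_setOf_eq, dist_zero_right, Real.norm_eq_abs] at this
    simp only [Set.mem_setOf_eq] at hx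
    have h2 := le_abs_self (g x)
    linarith
  have hCc : IsCompact {x : X | ε ≤ g x} := hK.of_isClosed_subset hCclosed hCK
  have hfcs : HasCompactSupport (⇑fc) := by
    apply HasCompactSupport.intro hCc
    intro x hx
    simp only [Set.mem_setOf_eq, not_le] at hx
    simp only [hfc, ContinuousMap.coe_mk, max_eq_right_iff]
    linarith
  set f : C₀(X, ℝ) := ⟨fc, hfcs.is_zero_at_infty⟩ with hf
  have hfpos : f ∈ posCone X := fun x => le_max_right _ _
  have hfx : ∀ x, f x = max (g x - ε) 0 := fun x => rfl
  -- ‖g - f‖ ≤ ε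
  have hgf : ‖g - f‖ ≤ ε := by
    rw [← ZeroAtInftyContinuousMap.norm_toBCF_eq_norm]
    apply BoundedContinuousFunction.norm_le hεpos.le |>.mpr
    intro x
    have h1 : (g - f).toBCF x = g x - f x := rfl
    rw [h1, hfx x, Real.norm_eq_abs, abs_le]
    have hg0 := hgpos x
    constructor
    · have : max (g x - ε) 0 ≤ g x := max_le (by linarith) hg0
      linarith
    · have : g x - ε ≤ max (g x - ε) 0 := le_max_left _ _
      linarith
  have hlip' : ‖T g - T f‖ ≤ M * ε := by
    calc ‖T g - T f‖ ≤ M * ‖g - f‖ := hlip g hgpos f hfpos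
    _ ≤ M * ε := by nlinarith
  have hMε : M * ε = 1 / 2 := by
    field_simp [hε]
    rw [hε]; field_simp
  have hpt : |T g y - T f y| ≤ M * ε := by
    calc |T g y - T f y| = ‖(T g - T f).toBCF y‖ := by
          rw [Real.norm_eq_abs]; rfl
    _ ≤ ‖(T g - T f).toBCF‖ := BoundedContinuousFunction.norm_coe_le_norm _ y
    _ = ‖T g - T f‖ := ZeroAtInftyContinuousMap.norm_toBCF_eq_norm
    _ ≤ M * ε := hlip'
  refine ⟨f, hfpos, hfcs, ?_⟩
  rw [hMε] at hpt
  have := abs_le.mp hpt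
  rw [hgy] at this
  linarith [this.2]
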